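/- Let M ∈ ℂ^{n×n} have rank n−1, let x, y ∈ ℂ^n be unit vectors with Mx = 0 and y^H M = 0 and y^H x ≠ 0, and let G be a group inverse of M. Set S = y y^H G^H + G^H x x^H. Then: if |y^H x| < 1 the matrix S has rank exactly 2, whereas if |y^H x| = 1 then S = 0 (the zero matrix). -/

import Mathlib

open Matrix

/-- `G` is a group inverse of `M`. -/
def IsGroupInverse {n : ℕ} (M G : Matrix (Fin n) (Fin n) ℂ) : Prop :=
  M * G = G * M ∧ G * M * G = G ∧ M * G * M = M

/-- The matrix `S = y yᴴ Gᴴ + Gᴴ x xᴴ`. -/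
noncomputable def Smat {n : ℕ} (x y : Fin n → ℂ) (G : Matrix (Fin n) (Fin n) ℂ) :
    Matrix (Fin n) (Fin n) ℂ :=
  vecMulVec y (star y) * Gᴴ + Gᴴ * vecMulVec x (star x)

open Module Submodule

lemma vecMulVec_mulVec' {n m : ℕ} (a : Fin m → ℂ) (b : Fin n → ℂ) (z : Fin n → ℂ) :
    vecMulVec a b *ᵥ z = (b ⬝ᵥ z) • a := by
  ext i
  simp [mulVec, vecMulVec_apply, dotProduct, Finset.sum_mul, Finset.mul_sum,
    mul_comm, mul_left_comm, mul_assoc]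

lemma Smat_eq' {n : ℕ} (x y : Fin n → ℂ) (G : Matrix (Fin n) (Fin n) ℂ) :
    Smat x y G = vecMulVec y (star (G *ᵥ y)) + vecMulVec (Gᴴ *ᵥ x) (star x) := by
  ext i j
  simp [Smat, mul_apply, vecMulVec_apply, mulVec, dotProduct, conjTranspose_apply,
    Finset.sum_mul, Finset.mul_sum, star_sum, mul_comm, mul_left_comm, mul_assoc]

lemma ker_aux {n : ℕ} (A : Matrix (Fin n) (Fin n) ℂ) (h : A.rank = n - 1) (hn : 1 ≤ n)
    {u : Fin n → ℂ} (hu : u ≠ 0) (hAu : A *ᵥ u = 0) {z : Fin n → ℂ} (hz : A *ᵥ z = 0) :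
    ∃ c : ℂ, z = c • u := by
  have hspan : finrank ℂ (span ℂ {u} : Submodule ℂ (Fin n → ℂ)) = 1 :=
    finrank_span_singleton hu
  have hrn : A.rank + finrank ℂ (LinearMap.ker A.mulVecLin) = n := by
    have := LinearMap.finrank_range_add_finrank_ker A.mulVecLin
    rwa [Module.finrank_fin_fun] at this
  have hker : finrank ℂ (LinearMap.ker A.mulVecLin) = 1 := by omega
  have hle : span ℂ {u} ≤ LinearMap.ker A.mulVecLin := by
    rw [span_le, Set.singleton_subset_iff]
    exact hAu
  have heq : span ℂ {u} = LinearMap.ker A.mulVecLin :=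
    Submodule.eq_of_le_of_finrank_le hle (by rw [hspan, hker])
  have : z ∈ span ℂ ({u} : Set (Fin n → ℂ)) := by
    rw [heq]; exact hz
  obtain ⟨c, hc⟩ := mem_span_singleton.1 this
  exact ⟨c, hc.symm⟩

lemma abs_one_of_smul {n : ℕ} {x y : Fin n → ℂ}
    (hx : star x ⬝ᵥ x = 1) {c : ℂ} (h : x = c • y) (hy : star y ⬝ᵥ y = 1) :
    ‖star y ⬝ᵥ x‖ = 1 := by
  have h1 : star y ⬝ᵥ x = c := by
    rw [h, dotProduct_smul, hy]; simp
  have h2 : (starRingEnd ℂ) c * c = 1 := by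
    have := hx
    rw [h, star_smul, smul_dotProduct, dotProduct_smul, hy] at this
    simpa [mul_assoc] using this
  have h3 : Complex.normSq c = 1 := by
    have h4 : (c * (starRingEnd ℂ) c : ℂ) = Complex.normSq c := Complex.mul_conj c
    have : ((Complex.normSq c : ℂ)) = 1 := by rw [← h4, mul_comm]; exact h2
    exact_mod_cast this
  rw [h1]
  have := Complex.sq_norm c
  nlinarith [norm_nonneg c]

lemma cs_equality {n : ℕ} {x y : Fin n → ℂ}
    (hx : star x ⬝ᵥ x = 1) (hy : star y ⬝ᵥ y = 1)
    (h : ‖star y ⬝ᵥ x‖ = 1) : ∃ r : ℂ, r ≠ 0 ∧ x = r • y := by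
  set X : EuclideanSpace ℂ (Fin n) := (WithLp.equiv 2 (Fin n → ℂ)).symm x with hX
  set Y : EuclideanSpace ℂ (Fin n) := (WithLp.equiv 2 (Fin n → ℂ)).symm y with hY
  have hiXX : (inner ℂ X X : ℂ) = 1 := by
    rw [EuclideanSpace.inner_eq_star_dotProduct, dotProduct_comm]; exact hx
  have hiYY : (inner ℂ Y Y : ℂ) = 1 := by
    rw [EuclideanSpace.inner_eq_star_dotProduct, dotProduct_comm]; exact hy
  have hiYX : (inner ℂ Y X : ℂ) = star y ⬝ᵥ x := by
    rw [EuclideanSpace.inner_eq_star_dotProduct, dotProduct_comm]; rfl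
  have hnX : ‖X‖ = 1 := by
    have := inner_self_eq_norm_sq_to_K (𝕜 := ℂ) X
    rw [hiXX] at this
    have h2 : (‖X‖ : ℂ)^2 = 1 := this.symm
    have h3 : ‖X‖^2 = 1 := by exact_mod_cast h2
    nlinarith [norm_nonneg X]
  have hnY : ‖Y‖ = 1 := by
    have := inner_self_eq_norm_sq_to_K (𝕜 := ℂ) Y
    rw [hiYY] at this
    have h2 : (‖Y‖ : ℂ)^2 = 1 := this.symm
    have h3 : ‖Y‖^2 = 1 := by exact_mod_cast h2
    nlinarith [norm_nonneg Y]
  have hX0 : X ≠ 0 := by intro h0; rw [h0] at hnX; simp at hnX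
  have hY0 : Y ≠ 0 := by intro h0; rw [h0] at hnY; simp at hnY
  have hcs : ‖(inner ℂ Y X : ℂ)‖ = ‖Y‖ * ‖X‖ := by
    rw [hiYX, hnX, hnY, h]; ring
  obtain ⟨r, hr, hXY⟩ := (norm_inner_eq_norm_iff hY0 hX0).1 hcs
  exact ⟨r, hr, funext fun i => congrArg (fun v : EuclideanSpace ℂ (Fin n) => v.ofLp i) hXY⟩

lemma abs_dot_comm {n : ℕ} (x y : Fin n → ℂ) :
    ‖star y ⬝ᵥ x‖ = ‖star x ⬝ᵥ y‖ := by
  rw [star_dotProduct]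
  exact Complex.norm_conj _

theorem stmt3 {n : ℕ} (M : Matrix (Fin n) (Fin n) ℂ) (hrank : M.rank = n - 1)
    (x y : Fin n → ℂ)
    (hxnorm : star x ⬝ᵥ x = 1) (hynorm : star y ⬝ᵥ y = 1)
    (hMx : M *ᵥ x = 0) (hyM : star y ᵥ* M = 0)
    (hyx : star y ⬝ᵥ x ≠ 0)
    (G : Matrix (Fin n) (Fin n) ℂ) (hG : IsGroupInverse M G) :
    (‖star y ⬝ᵥ x‖ < 1 → (Smat x y G).rank = 2) ∧
    (‖star y ⬝ᵥ x‖ = 1 → Smat x y G = 0) := by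
  obtain ⟨h1, h2, h3⟩ := hG
  have e_GGM : G * (G * M) = G := by rw [← h1, ← mul_assoc]; exact h2
  have e_MGG : (M * G) * G = G := by rw [h1]; exact h2
  have e_MGG' : M * (G * G) = G := by rw [← mul_assoc]; exact e_MGG
  have e_MMG : M * (M * G) = M := by rw [h1, ← mul_assoc]; exact h3
  have e_GMM : (G * M) * M = M := by rw [← h1]; exact h3
  have e_GMG : G * (M * G) = G := by rw [← mul_assoc]; exact h2
  have hGx : G *ᵥ x = 0 := by
    calc G *ᵥ x = (G * (G * M)) *ᵥ x := by rw [e_GGM]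
    _ = G *ᵥ (G *ᵥ (M *ᵥ x)) := by rw [mulVec_mulVec, mulVec_mulVec, mul_assoc]
    _ = 0 := by rw [hMx, mulVec_zero, mulVec_zero]
  have hyG : star y ᵥ* G = 0 := by
    calc star y ᵥ* G = star y ᵥ* (M * (G * G)) := by rw [e_MGG']
    _ = (star y ᵥ* M) ᵥ* (G * G) := by rw [vecMul_vecMul]
    _ = 0 := by rw [hyM, zero_vecMul]
  have hGHy : Gᴴ *ᵥ y = 0 := by
    have := congrArg star hyG
    rw [star_vecMul, star_star] at this
    simpa using this
  have hMHy : Mᴴ *ᵥ y = 0 := by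
    have := congrArg star hyM
    rw [star_vecMul, star_star] at this
    simpa using this
  have hn : 1 ≤ n := by
    rcases Nat.eq_zero_or_pos n with h0 | h0
    · subst h0; simp [dotProduct] at hxnorm
    · exact h0
  have hx0 : x ≠ 0 := by rintro rfl; simp at hxnorm
  have hy0 : y ≠ 0 := by rintro rfl; simp at hynorm
  set v : Fin n → ℂ := G *ᵥ y with hv_def
  set w : Fin n → ℂ := Gᴴ *ᵥ x with hw_def
  have hSeq : Smat x y G = vecMulVec y (star v) + vecMulVec w (star x) := Smat_eq' x y G
  have hSmul : ∀ z, Smat x y G *ᵥ z = (star v ⬝ᵥ z) • y + (star x ⬝ᵥ z) • w := by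
    intro z
    rw [hSeq, add_mulVec, vecMulVec_mulVec', vecMulVec_mulVec']
  constructor
  · -- rank 2 case
    intro habs
    have habs_ne : ‖star y ⬝ᵥ x‖ ≠ 1 := ne_of_lt habs
    have hvne : v ≠ 0 := by
      intro hv
      have hMy : M *ᵥ y = 0 := by
        calc M *ᵥ y = (M * (M * G)) *ᵥ y := by rw [e_MMG]
        _ = M *ᵥ (M *ᵥ (G *ᵥ y)) := by rw [mulVec_mulVec, mulVec_mulVec, mul_assoc]
        _ = M *ᵥ (M *ᵥ v) := by rw [hv_def]
        _ = 0 := by rw [hv, mulVec_zero, mulVec_zero]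
      obtain ⟨c, hc⟩ := ker_aux M hrank hn hx0 hMx hMy
      exact habs_ne (by rw [abs_dot_comm]; exact abs_one_of_smul hynorm hc hxnorm)
    have hMvne : M *ᵥ v ≠ 0 := by
      intro hMv
      apply hvne
      calc v = (G * (M * G)) *ᵥ y := by rw [e_GMG, hv_def]
      _ = G *ᵥ (M *ᵥ (G *ᵥ y)) := by rw [mulVec_mulVec, mulVec_mulVec, mul_assoc]
      _ = G *ᵥ (M *ᵥ v) := by rw [hv_def]
      _ = 0 := by rw [hMv, mulVec_zero]
    have hMHw : Mᴴ *ᵥ w ≠ 0 := by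
      intro hMw
      have hz : (G * M)ᴴ *ᵥ x = 0 := by
        rw [conjTranspose_mul, ← mulVec_mulVec, ← hw_def]
        exact hMw
      have hgm : star x ᵥ* (G * M) = 0 := by
        have := congrArg star hz
        rw [star_mulVec, conjTranspose_conjTranspose] at this
        simpa using this
      have hxG : star x ᵥ* G = 0 := by
        calc star x ᵥ* G = star x ᵥ* ((G * M) * G) := by rw [h2]
        _ = (star x ᵥ* (G * M)) ᵥ* G := by rw [vecMul_vecMul]
        _ = 0 := by rw [hgm, zero_vecMul]
      have hxM : star x ᵥ* M = 0 := by
        calc star x ᵥ* M = star x ᵥ* ((G * M) * M) := by rw [e_GMM]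
        _ = (star x ᵥ* (G * M)) ᵥ* M := by rw [vecMul_vecMul]
        _ = 0 := by rw [hgm, zero_vecMul]
      have hTrank : Mᵀ.rank = n - 1 := by rw [rank_transpose]; exact hrank
      have hys : (star y : Fin n → ℂ) ≠ 0 := by
        intro h0
        apply hy0
        have := congrArg star h0
        rwa [star_star, star_zero] at this
      have hT1 : Mᵀ *ᵥ star y = 0 := by rw [mulVec_transpose]; exact hyM
      have hT2 : Mᵀ *ᵥ star x = 0 := by rw [mulVec_transpose]; exact hxM
      obtain ⟨c, hc⟩ := ker_aux Mᵀ hTrank hn hys hT1 hT2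
      have hxy : x = star c • y := by
        have := congrArg star hc
        rwa [star_star, star_smul, star_star] at this
      exact habs_ne (abs_one_of_smul hxnorm hxy hynorm)
    have hwne : w ≠ 0 := fun h0 => hMHw (by rw [h0, mulVec_zero])
    have hind : LinearIndependent ℂ ![y, w] := by
      rw [LinearIndependent.pair_iff]
      intro s t hst
      have hMH := congrArg (fun z => Mᴴ *ᵥ z) hst
      simp only [mulVec_add, mulVec_smul, hMHy, smul_zero, zero_add, mulVec_zero] at hMH
      have ht : t = 0 := by
        by_contra ht
        exact hMHw ((smul_eq_zero.1 hMH).resolve_left ht)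
      subst ht
      rw [zero_smul, add_zero] at hst
      exact ⟨(smul_eq_zero.1 hst).resolve_right hy0, rfl⟩
    have hy_mem : y ∈ LinearMap.range (Smat x y G).mulVecLin := by
      obtain ⟨i, hi⟩ := Function.ne_iff.1 hMvne
      have hi' : (M *ᵥ v) i ≠ 0 := by simpa using hi
      set z : Fin n → ℂ := Mᴴ *ᵥ Pi.single i 1 with hz_def
      have hxz : star x ⬝ᵥ z = 0 := by
        rw [hz_def, dotProduct_mulVec, ← star_mulVec, hMx, star_zero, zero_dotProduct]
      have hvz : star v ⬝ᵥ z = star ((M *ᵥ v) i) := by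
        rw [hz_def, dotProduct_mulVec, ← star_mulVec, dotProduct_single, mul_one]
        rfl
      have hc0 : star v ⬝ᵥ z ≠ 0 := by
        rw [hvz]
        simpa using hi'
      refine ⟨(star v ⬝ᵥ z)⁻¹ • z, ?_⟩
      rw [mulVecLin_apply, mulVec_smul, hSmul, hxz, zero_smul, add_zero, smul_smul,
        inv_mul_cancel₀ hc0, one_smul]
    have hw_mem : w ∈ LinearMap.range (Smat x y G).mulVecLin := by
      obtain ⟨i, hi⟩ := Function.ne_iff.1 hx0
      have hi' : x i ≠ 0 := by simpa using hi
      set z : Fin n → ℂ := (1 - M * G)ᴴ *ᵥ Pi.single i 1 with hz_def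
      have hMGv : (1 - M * G) *ᵥ v = 0 := by
        rw [sub_mulVec, one_mulVec]
        have : (M * G) *ᵥ v = v := by
          calc (M * G) *ᵥ v = ((M * G) * G) *ᵥ y := by rw [hv_def, mulVec_mulVec]
          _ = v := by rw [e_MGG, hv_def]
        rw [this, sub_self]
      have hMGx : (1 - M * G) *ᵥ x = x := by
        rw [sub_mulVec, one_mulVec, ← mulVec_mulVec, hGx, mulVec_zero, sub_zero]
      have hvz : star v ⬝ᵥ z = 0 := by
        rw [hz_def, dotProduct_mulVec, ← star_mulVec, hMGv, star_zero, zero_dotProduct]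
      have hxz : star x ⬝ᵥ z = star (x i) := by
        rw [hz_def, dotProduct_mulVec, ← star_mulVec, hMGx, dotProduct_single, mul_one]
        rfl
      have hc0 : star x ⬝ᵥ z ≠ 0 := by
        rw [hxz]
        simpa using hi'
      refine ⟨(star x ⬝ᵥ z)⁻¹ • z, ?_⟩
      rw [mulVecLin_apply, mulVec_smul, hSmul, hvz, zero_smul, zero_add, smul_smul,
        inv_mul_cancel₀ hc0, one_smul]
    have hrange : LinearMap.range (Smat x y G).mulVecLin = span ℂ {y, w} := by
      apply le_antisymm
      · rintro u ⟨z, rfl⟩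
        rw [mulVecLin_apply, hSmul]
        exact mem_span_pair.2 ⟨_, _, rfl⟩
      · rw [span_le]
        rintro u hu
        simp only [Set.mem_insert_iff, Set.mem_singleton_iff] at hu
        rcases hu with rfl | rfl
        · exact hy_mem
        · exact hw_mem
    have hset : ({y, w} : Set (Fin n → ℂ)) = Set.range ![y, w] := by
      rw [Matrix.range_cons, Matrix.range_cons_empty]
      rfl
    show finrank ℂ (LinearMap.range (Smat x y G).mulVecLin) = 2
    rw [hrange, hset]
    simpa using finrank_span_eq_card hind
  · -- S = 0 case
    intro habs
    obtain ⟨r, hr, hxy⟩ := cs_equality hxnorm hynorm habs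
    have hv0 : v = 0 := by
      have h0 : (0 : Fin n → ℂ) = r • v := by
        calc (0 : Fin n → ℂ) = G *ᵥ x := hGx.symm
        _ = r • v := by rw [hxy, mulVec_smul, hv_def]
      exact ((smul_eq_zero.1 h0.symm).resolve_left hr)
    have hw0 : w = 0 := by
      calc w = Gᴴ *ᵥ (r • y) := by rw [hw_def, hxy]
      _ = r • (Gᴴ *ᵥ y) := by rw [mulVec_smul]
      _ = 0 := by rw [hGHy, smul_zero]
    rw [hSeq, hv0, hw0]
    ext i j
    simp [vecMulVec_apply]
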